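/- Let G be an oriented hypergraph. The contributor-dual map (S,c) ↦ (T,c*), where T is the unused edge set of (S,c) and c*(ω(t_v)) = (h_v, t_{π_c(v)}), is a bijection from the set of diagonally reduced contributors of G onto the set of diagonally reduced contributors of the incidence dual G*; this bijection preserves csgn and interchanges reduced sets with unused sets: if (S,c) has reduced set S and unused edge set T, then (T,c*) has reduced set T and unused set S. -/

import Mathlib

open Matrix
open scoped Classical

noncomputable section

/-- An oriented hypergraph `G = (V, E, I, ς, ω, σ)`: `vtx = ς` assigns each incidence
its vertex, `edg = ω` assigns each incidence its edge, and `sgn = σ` is its sign. -/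
structure OHG (V E I : Type*) where
  vtx : I → V
  edg : I → E
  sgn : I → ℤˣ

/-- The incidence dual `G* = (E, V, I, ω, ς, σ)`. -/
def OHG.dual {V E I : Type*} (G : OHG V E I) : OHG E V I :=
  ⟨G.edg, G.vtx, G.sgn⟩

section Defs

variable {V E I : Type*} [Fintype V] [DecidableEq V] [Fintype E] [DecidableEq E]
  [Fintype I] [DecidableEq I]

/-- A diagonally reduced contributor `(S, c)`: `c : V∖S → I × I`, tails sit at their
vertices, tail and head share an edge, the head map is a permutation of `V∖S`, and `c`
is edge-monic. -/
def IsDiagRed (G : OHG V E I) (S : Finset V) (c : {v : V // v ∉ S} → I × I) : Prop :=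
  (∀ v, G.vtx (c v).1 = v.1) ∧ (∀ v, G.edg (c v).1 = G.edg (c v).2) ∧
    Set.BijOn (fun v : {v : V // v ∉ S} => G.vtx (c v).2) Set.univ {w : V | w ∉ S} ∧
    Function.Injective fun v : {v : V // v ∉ S} => G.edg (c v).1

/-- The unused edge set `T = E ∖ {ω (t_v) : v ∈ V∖S}` of a diagonally reduced
contributor. -/
def unusedT (G : OHG V E I) (S : Finset V) (c : {v : V // v ∉ S} → I × I) :
    Finset E :=
  Finset.univ.filter fun e => ∀ v : {v : V // v ∉ S}, G.edg (c v).1 ≠ e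

/-- The head map of a diagonally reduced contributor, extended to all of `V` by the
identity on `S`. -/
def gmapD (G : OHG V E I) (S : Finset V) (c : {v : V // v ∉ S} → I × I) : V → V :=
  fun v => if h : v ∈ S then v else G.vtx (c ⟨v, h⟩).2

/-- The orbit of `v` under iteration of `f` (for `f` a bijection of a finite type this
is the full cycle of `v`). -/
def orbitOf {α : Type*} [Fintype α] [DecidableEq α] (f : α → α) (a : α) : Finset α :=
  Finset.univ.filter fun b => ∃ n : ℕ, f^[n] a = b

/-- The set of orbits of `f`. -/
def orbitsOf {α : Type*} [Fintype α] [DecidableEq α] (f : α → α) :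
    Finset (Finset α) :=
  Finset.univ.image (orbitOf f)

/-- `ec c`: the number of orbits of `π_c` of even cardinality. -/
def ecD (G : OHG V E I) (S : Finset V) (c : {v : V // v ∉ S} → I × I) : ℕ :=
  ((orbitsOf (gmapD G S c)).filter fun O => Even O.card).card

/-- `bs c`: the number of backsteps of a diagonally reduced contributor. -/
def bsD (G : OHG V E I) (S : Finset V) (c : {v : V // v ∉ S} → I × I) : ℕ :=
  (Finset.univ.filter fun v : {v : V // v ∉ S} => (c v).1 = (c v).2).card

/-- A negative orbit: not a single backstep, and the product of the adjacency signs
`-σ(t_v)·σ(h_v)` over the orbit is `-1`. -/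
def NegOrbitD (G : OHG V E I) (S : Finset V) (c : {v : V // v ∉ S} → I × I)
    (O : Finset V) : Prop :=
  (¬ ∃ v : {v : V // v ∉ S}, O = {v.1} ∧ (c v).1 = (c v).2) ∧
    ∏ v ∈ Finset.univ.filter (fun v : {v : V // v ∉ S} => v.1 ∈ O),
      (-(G.sgn (c v).1 * G.sgn (c v).2)) = (-1 : ℤˣ)

/-- `nc c`: the number of negative orbits of a diagonally reduced contributor. -/
def ncD (G : OHG V E I) (S : Finset V) (c : {v : V // v ∉ S} → I × I) : ℕ :=
  ((orbitsOf (gmapD G S c)).filter (NegOrbitD G S c)).card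

/-- The sign `csgn c = (-1) ^ (ec c + nc c + bs c)` of a diagonally reduced
contributor. -/
def csgnD (G : OHG V E I) (S : Finset V) (c : {v : V // v ∉ S} → I × I) : ℤ :=
  (-1) ^ (ecD G S c + ncD G S c + bsD G S c)

/-- The incidence matrix of an oriented hypergraph. -/
def incM (G : OHG V E I) : Matrix V E ℤ :=
  Matrix.of fun v e =>
    ∑ i ∈ Finset.univ.filter (fun i => G.vtx i = v ∧ G.edg i = e), (G.sgn i : ℤ)

/-- The Laplacian `L = H Hᵀ` of an oriented hypergraph. -/
def lapM (G : OHG V E I) : Matrix V V ℤ :=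
  incM G * (incM G)ᵀ

end Defs

variable {V E I : Type*} [Fintype V] [DecidableEq V] [Fintype E] [DecidableEq E]
  [Fintype I] [DecidableEq I]

/-- The contributor-dual `c*` of a (diagonally reduced) contributor `(S, c)`: on the
edge `ω (t_v)` it takes the value `(h_v, t_{π_c v})`. -/
noncomputable def dualCont (G : OHG V E I) (S : Finset V)
    (c : {v : V // v ∉ S} → I × I) :
    {e : E // e ∉ unusedT G S c} → I × I := fun e =>
  have hex : ∃ v : {v : V // v ∉ S}, G.edg (c v).1 = e.1 := by
    have h2 := e.2
    simp only [unusedT, Finset.mem_filter, Finset.mem_univ, true_and, not_forall,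
      not_not] at h2
    exact h2
  ((c (Classical.choose hex)).2,
    if h : G.vtx (c (Classical.choose hex)).2 ∈ S then (c (Classical.choose hex)).1
    else (c ⟨G.vtx (c (Classical.choose hex)).2, h⟩).1)

set_option linter.unusedSectionVars false

section OrbitLemmas
variable {α β : Type*} [Fintype α] [DecidableEq α] [Fintype β] [DecidableEq β]

lemma iterate_comm (f : α → α) (g : β → β) (φ : α → β)
    (hcomm : ∀ a, g (φ a) = φ (f a)) (n : ℕ) (a : α) : g^[n] (φ a) = φ (f^[n] a) := by
  induction n generalizing a with
  | zero => rfl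
  | succ n ih => rw [Function.iterate_succ_apply, Function.iterate_succ_apply, hcomm, ih]

lemma orbitOf_image_of_comm (f : α → α) (g : β → β) (φ : α → β)
    (hcomm : ∀ a, g (φ a) = φ (f a)) (a : α) :
    orbitOf g (φ a) = (orbitOf f a).image φ := by
  ext b
  simp only [orbitOf, Finset.mem_image, Finset.mem_filter, Finset.mem_univ, true_and]
  constructor
  · rintro ⟨n, rfl⟩; exact ⟨f^[n] a, ⟨n, rfl⟩, (iterate_comm f g φ hcomm n a).symm⟩
  · rintro ⟨x, ⟨n, rfl⟩, rfl⟩; exact ⟨n, iterate_comm f g φ hcomm n a⟩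

lemma orbitOf_fixed (g : α → α) (a : α) (h : g a = a) : orbitOf g a = {a} := by
  ext b
  simp only [orbitOf, Finset.mem_filter, Finset.mem_univ, true_and, Finset.mem_singleton]
  constructor
  · rintro ⟨n, rfl⟩; rw [Function.iterate_fixed h]
  · rintro rfl; exact ⟨0, rfl⟩

lemma self_mem_orbitOf (f : α → α) (a : α) : a ∈ orbitOf f a := by
  simp only [orbitOf, Finset.mem_filter, Finset.mem_univ, true_and]; exact ⟨0, rfl⟩

lemma apply_mem_orbitOf (f : α → α) {a b : α} (hb : b ∈ orbitOf f a) :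
    f b ∈ orbitOf f a := by
  simp only [orbitOf, Finset.mem_filter, Finset.mem_univ, true_and] at hb ⊢
  obtain ⟨n, rfl⟩ := hb
  exact ⟨n + 1, Function.iterate_succ_apply' f n a⟩

lemma mem_orbitsOf {f : α → α} {O : Finset α} :
    O ∈ orbitsOf f ↔ ∃ a, orbitOf f a = O := by
  simp [orbitsOf]

lemma filter_orbitsOf_card (f : α → α) (g : β → β) (φ : α → β)
    (hφ : Function.Injective φ) (hcomm : ∀ a, g (φ a) = φ (f a))
    (Sb : Finset β) (hfix : ∀ b ∈ Sb, g b = b)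
    (hrange : ∀ b, b ∉ Sb → ∃ a, φ a = b)
    (Q : Finset β → Prop) [DecidablePred Q] (hQs : ∀ b ∈ Sb, ¬ Q {b}) :
    ((orbitsOf g).filter Q).card =
      ((orbitsOf f).filter (fun O => Q (O.image φ))).card := by
  have himage : (orbitsOf g).filter Q =
      ((orbitsOf f).filter (fun O => Q (O.image φ))).image (Finset.image φ) := by
    ext O
    simp only [Finset.mem_filter, orbitsOf, Finset.mem_image, Finset.mem_univ, true_and]
    constructor
    · rintro ⟨⟨b, rfl⟩, hQ⟩
      by_cases hb : b ∈ Sb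
      · rw [orbitOf_fixed g b (hfix b hb)] at hQ
        exact absurd hQ (hQs b hb)
      · obtain ⟨a, rfl⟩ := hrange b hb
        exact ⟨orbitOf f a, ⟨⟨a, rfl⟩, by
          rw [← orbitOf_image_of_comm f g φ hcomm]; exact hQ⟩,
          (orbitOf_image_of_comm f g φ hcomm a).symm⟩
    · rintro ⟨P, ⟨⟨a, rfl⟩, hQ⟩, rfl⟩
      exact ⟨⟨φ a, orbitOf_image_of_comm f g φ hcomm a⟩, hQ⟩
  rw [himage, Finset.card_image_of_injective _ (Finset.image_injective hφ)]

lemma image_of_mapsTo_inj {f : α → α} (hf : Function.Injective f) {O : Finset α}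
    (h : ∀ a ∈ O, f a ∈ O) : O.image f = O :=
  Finset.eq_of_subset_of_card_le (fun b hb => by
      obtain ⟨a, ha, rfl⟩ := Finset.mem_image.1 hb; exact h a ha)
    (le_of_eq (Finset.card_image_of_injective _ hf).symm)

end OrbitLemmas

section Key

variable {V E I : Type*} [Fintype V] [DecidableEq V] [Fintype E] [DecidableEq E]
  [Fintype I] [DecidableEq I]

variable (G : OHG V E I) (S : Finset V) (c : {v : V // v ∉ S} → I × I)

lemma mem_unusedT {e : E} : e ∈ unusedT G S c ↔ ∀ v, G.edg (c v).1 ≠ e := by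
  simp [unusedT]

lemma not_mem_unusedT {e : E} : e ∉ unusedT G S c ↔ ∃ v, G.edg (c v).1 = e := by
  simp [unusedT]


/-- The permutation `π_c` as a self-map of the subtype `V ∖ S`. -/
def pMap (hc : IsDiagRed G S c) : {v : V // v ∉ S} → {v : V // v ∉ S} :=
  fun v => ⟨G.vtx (c v).2, hc.2.2.1.1 (Set.mem_univ v)⟩

lemma pMap_inj (hc : IsDiagRed G S c) : Function.Injective (pMap G S c hc) := by
  intro v w h
  exact hc.2.2.1.2.1 (Set.mem_univ v) (Set.mem_univ w) (congrArg Subtype.val h)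

lemma pMap_surj (hc : IsDiagRed G S c) : Function.Surjective (pMap G S c hc) := by
  have := Finite.injective_iff_bijective.1 (pMap_inj G S c hc)
  exact this.2

/-- The edge bijection `v ↦ ω(t_v)` from `V ∖ S` to `E ∖ T`. -/
def phiMap : {v : V // v ∉ S} → {e : E // e ∉ unusedT G S c} :=
  fun v => ⟨G.edg (c v).1, (not_mem_unusedT G S c).2 ⟨v, rfl⟩⟩

lemma phiMap_inj (hc : IsDiagRed G S c) : Function.Injective (phiMap G S c) := by
  intro v w h
  exact hc.2.2.2 (congrArg Subtype.val h)

lemma phiMap_surj : Function.Surjective (phiMap G S c) := by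
  intro e
  obtain ⟨v, hv⟩ := (not_mem_unusedT G S c).1 e.2
  exact ⟨v, Subtype.ext hv⟩

lemma dualCont_eq (hc : IsDiagRed G S c) (e : {e : E // e ∉ unusedT G S c}) (v : {v : V // v ∉ S})
    (hv : G.edg (c v).1 = e.1) :
    dualCont G S c e = ((c v).2, (c (pMap G S c hc v)).1) := by
  have hex : ∃ w : {v : V // v ∉ S}, G.edg (c w).1 = e.1 := ⟨v, hv⟩
  have hsp : G.edg (c (Classical.choose hex)).1 = e.1 := Classical.choose_spec hex
  have hw : Classical.choose hex = v := hc.2.2.2 (hsp.trans hv.symm)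
  have h2 : G.vtx (c (Classical.choose hex)).2 ∉ S := by
    rw [hw]; exact (pMap G S c hc v).2
  show ((c (Classical.choose hex)).2,
    if h : G.vtx (c (Classical.choose hex)).2 ∈ S then (c (Classical.choose hex)).1
    else (c ⟨G.vtx (c (Classical.choose hex)).2, h⟩).1) = _
  rw [dif_neg h2]
  subst hw
  rfl

lemma dualCont_phiMap (hc : IsDiagRed G S c) (v : {v : V // v ∉ S}) :
    dualCont G S c (phiMap G S c v) = ((c v).2, (c (pMap G S c hc v)).1) :=
  dualCont_eq G S c hc _ v rfl

lemma dc1 (hc : IsDiagRed G S c) (v : {v : V // v ∉ S}) :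
    (dualCont G S c (phiMap G S c v)).1 = (c v).2 := by
  rw [dualCont_phiMap G S c hc v]

lemma dc2 (hc : IsDiagRed G S c) (v : {v : V // v ∉ S}) :
    (dualCont G S c (phiMap G S c v)).2 = (c (pMap G S c hc v)).1 := by
  rw [dualCont_phiMap G S c hc v]

lemma hm1 (hc : IsDiagRed G S c) (v : {v : V // v ∉ S}) :
    G.dual.edg (dualCont G S c (phiMap G S c v)).1 = (pMap G S c hc v).1 := by
  rw [dc1 G S c hc v]; rfl

lemma hm2 (hc : IsDiagRed G S c) (v : {v : V // v ∉ S}) :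
    G.dual.vtx (dualCont G S c (phiMap G S c v)).2 =
      (phiMap G S c (pMap G S c hc v)).1 := by
  rw [dc2 G S c hc v]; rfl

lemma key_isDiagRed (hc : IsDiagRed G S c) : IsDiagRed G.dual (unusedT G S c) (dualCont G S c) := by
  refine ⟨?_, ?_, ⟨?_, ?_, ?_⟩, ?_⟩
  · intro e
    obtain ⟨v, rfl⟩ := phiMap_surj G S c e
    rw [dc1 G S c hc v]
    exact (hc.2.1 v).symm
  · intro e
    obtain ⟨v, rfl⟩ := phiMap_surj G S c e
    rw [dc1 G S c hc v, dc2 G S c hc v]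
    exact (hc.1 (pMap G S c hc v)).symm
  · intro e _
    obtain ⟨v, rfl⟩ := phiMap_surj G S c e
    show G.dual.vtx (dualCont G S c (phiMap G S c v)).2 ∉ unusedT G S c
    rw [hm2 G S c hc v]
    exact (phiMap G S c (pMap G S c hc v)).2
  · intro e1 _ e2 _ h
    obtain ⟨v, rfl⟩ := phiMap_surj G S c e1
    obtain ⟨w, rfl⟩ := phiMap_surj G S c e2
    simp only [hm2 G S c hc] at h
    exact congrArg _ (pMap_inj G S c hc (phiMap_inj G S c hc (Subtype.ext h)))
  · intro b hb
    obtain ⟨u, hu⟩ := phiMap_surj G S c ⟨b, hb⟩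
    obtain ⟨w, hw⟩ := pMap_surj G S c hc u
    exact ⟨phiMap G S c w, Set.mem_univ _, by
      show G.dual.vtx (dualCont G S c (phiMap G S c w)).2 = b
      rw [hm2 G S c hc w, hw, hu]⟩
  · intro e1 e2 h
    obtain ⟨v, rfl⟩ := phiMap_surj G S c e1
    obtain ⟨w, rfl⟩ := phiMap_surj G S c e2
    simp only [hm1 G S c hc] at h
    exact congrArg _ (pMap_inj G S c hc (Subtype.ext h))

lemma key_unused (hc : IsDiagRed G S c) : unusedT G.dual (unusedT G S c) (dualCont G S c) = S := by
  ext w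
  simp only [unusedT, Finset.mem_filter, Finset.mem_univ, true_and]
  refine (Finset.mem_filter_univ (p := fun e => ∀ v : {e : E // e ∉ unusedT G S c}, G.dual.edg (dualCont G S c v).1 ≠ e) w).trans ?_
  constructor
  · intro h
    by_contra hw
    obtain ⟨v, hv⟩ := pMap_surj G S c hc ⟨w, hw⟩
    exact h (phiMap G S c v) (by rw [hm1 G S c hc v, hv])
  · intro hw e
    obtain ⟨v, rfl⟩ := phiMap_surj G S c e
    rw [hm1 G S c hc v]
    exact fun h => (pMap G S c hc v).2 (h ▸ hw)

lemma gmap_fix (s : V) (hs : s ∈ S) : gmapD G S c s = s := dif_pos hs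

lemma gmap_commV (hc : IsDiagRed G S c) (v : {v : V // v ∉ S}) :
    gmapD G S c v.1 = (pMap G S c hc v).1 := by
  show (if h : v.1 ∈ S then v.1 else G.vtx (c ⟨v.1, h⟩).2) = _
  rw [dif_neg v.2]
  rfl

lemma gmap_commE (hc : IsDiagRed G S c) (v : {v : V // v ∉ S}) :
    gmapD G.dual (unusedT G S c) (dualCont G S c) (phiMap G S c v).1 =
      (phiMap G S c (pMap G S c hc v)).1 := by
  show (if h : (phiMap G S c v).1 ∈ unusedT G S c then (phiMap G S c v).1
    else G.dual.vtx (dualCont G S c ⟨(phiMap G S c v).1, h⟩).2) = _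
  rw [dif_neg (phiMap G S c v).2]
  exact hm2 G S c hc v

lemma filter_mem_image_val {α : Type*} [Fintype α] [DecidableEq α] {P : α → Prop}
    [DecidablePred P] (O : Finset {a : α // P a}) :
    Finset.univ.filter (fun v : {a : α // P a} => v.1 ∈ O.image Subtype.val) = O := by
  ext v
  simp only [Finset.mem_filter, Finset.mem_univ, true_and, Finset.mem_image]
  constructor
  · rintro ⟨u, hu, he⟩; rwa [← Subtype.ext he]
  · intro hv; exact ⟨v, hv, rfl⟩

lemma filter_mem_image_phi (O : Finset {v : V // v ∉ S}) :
    Finset.univ.filter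
        (fun e : {e : E // e ∉ unusedT G S c} =>
          e.1 ∈ O.image (fun v => (phiMap G S c v).1)) =
      O.image (phiMap G S c) := by
  ext e
  simp only [Finset.mem_filter, Finset.mem_univ, true_and, Finset.mem_image]
  constructor
  · rintro ⟨u, hu, he⟩; exact ⟨u, hu, Subtype.ext he⟩
  · rintro ⟨u, hu, rfl⟩; exact ⟨u, hu, rfl⟩

lemma prod_transfer (hc : IsDiagRed G S c) (O : Finset {v : V // v ∉ S})
    (himg : O.image (pMap G S c hc) = O) :
    ∏ e ∈ O.image (phiMap G S c),
        (-(G.dual.sgn (dualCont G S c e).1 * G.dual.sgn (dualCont G S c e).2)) =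
      ∏ v ∈ O, (-(G.sgn (c v).1 * G.sgn (c v).2)) := by
  rw [Finset.prod_image (fun a _ b _ h => phiMap_inj G S c hc h)]
  have hterm : ∀ v ∈ O,
      (-(G.dual.sgn (dualCont G S c (phiMap G S c v)).1 *
         G.dual.sgn (dualCont G S c (phiMap G S c v)).2)) =
      (-(G.sgn (c v).2 * G.sgn (c (pMap G S c hc v)).1)) := by
    intro v _
    rw [dc1 G S c hc v, dc2 G S c hc v]
    rfl
  rw [Finset.prod_congr rfl hterm]
  have hsplit : ∀ (f g : {v : V // v ∉ S} → ℤˣ),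
      ∏ v ∈ O, (-(f v * g v)) =
        (∏ _v ∈ O, (-1 : ℤˣ)) * ((∏ v ∈ O, f v) * (∏ v ∈ O, g v)) := by
    intro f g
    rw [← Finset.prod_mul_distrib, ← Finset.prod_mul_distrib]
    exact Finset.prod_congr rfl fun v _ => by rw [neg_one_mul]
  rw [hsplit, hsplit]
  have hps : ∏ v ∈ O, G.sgn (c (pMap G S c hc v)).1 = ∏ v ∈ O, G.sgn (c v).1 := by
    conv_rhs => rw [← himg]
    rw [Finset.prod_image (fun a _ b _ h => pMap_inj G S c hc h)]
  rw [hps, mul_comm (∏ v ∈ O, G.sgn (c v).2)]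

lemma neg_iff_transfer (hc : IsDiagRed G S c) (O : Finset {v : V // v ∉ S})
    (hcl : ∀ v ∈ O, pMap G S c hc v ∈ O)
    (himg : O.image (pMap G S c hc) = O) :
    NegOrbitD G.dual (unusedT G S c) (dualCont G S c)
        (O.image (fun v => (phiMap G S c v).1)) ↔
      NegOrbitD G S c (O.image Subtype.val) := by
  have hsing : (∃ e : {e : E // e ∉ unusedT G S c},
      O.image (fun v => (phiMap G S c v).1) = {e.1} ∧
        (dualCont G S c e).1 = (dualCont G S c e).2) ↔
      (∃ v : {v : V // v ∉ S}, O.image Subtype.val = {v.1} ∧ (c v).1 = (c v).2) := by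
    constructor
    · rintro ⟨e, hOe, he⟩
      have hmem : e.1 ∈ O.image (fun v => (phiMap G S c v).1) := by
        rw [hOe]; exact Finset.mem_singleton_self e.1
      obtain ⟨u, hu, hue⟩ := Finset.mem_image.1 hmem
      have heq : phiMap G S c u = e := Subtype.ext hue
      subst heq
      have hOu : O = {u} := by
        refine Finset.eq_singleton_iff_unique_mem.2 ⟨hu, fun w hw => ?_⟩
        have hmw : (phiMap G S c w).1 ∈ O.image (fun v => (phiMap G S c v).1) :=
          Finset.mem_image_of_mem _ hw
        rw [hOe] at hmw
        exact phiMap_inj G S c hc (Subtype.ext (Finset.mem_singleton.1 hmw))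
      have hpu : pMap G S c hc u = u := by
        have := hcl u hu
        rw [hOu] at this
        exact Finset.mem_singleton.1 this
      refine ⟨u, ?_, ?_⟩
      · rw [hOu, Finset.image_singleton]
      · rw [dc1 G S c hc u, dc2 G S c hc u, hpu] at he
        exact he.symm
    · rintro ⟨v, hOv, hv⟩
      have hvO : v ∈ O := by
        have hmem : v.1 ∈ O.image Subtype.val := by
          rw [hOv]; exact Finset.mem_singleton_self v.1
        obtain ⟨u, hu, hue⟩ := Finset.mem_image.1 hmem
        rwa [← Subtype.ext hue]
      have hpv : pMap G S c hc v = v :=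
        Subtype.ext (by show G.vtx (c v).2 = v.1; rw [← hv]; exact hc.1 v)
      refine ⟨phiMap G S c v, ?_, ?_⟩
      · have hOv' : O = {v} := by
          refine Finset.eq_singleton_iff_unique_mem.2 ⟨hvO, fun w hw => ?_⟩
          have hmw : w.1 ∈ O.image Subtype.val := Finset.mem_image_of_mem _ hw
          rw [hOv] at hmw
          exact Subtype.ext (Finset.mem_singleton.1 hmw)
        rw [hOv', Finset.image_singleton]
      · rw [dc1 G S c hc v, dc2 G S c hc v, hpv]
        exact hv.symm
  unfold NegOrbitD
  refine and_congr (not_congr hsing) ?_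
  rw [filter_mem_image_phi G S c O, filter_mem_image_val O,
    prod_transfer G S c hc O himg]

lemma not_neg_singleton (b : V) (hb : b ∈ S) : ¬ NegOrbitD G S c {b} := by
  rintro ⟨-, hprod⟩
  have hemp : Finset.univ.filter
      (fun v : {v : V // v ∉ S} => v.1 ∈ ({b} : Finset V)) = ∅ := by
    ext v
    simp only [Finset.mem_filter, Finset.mem_univ, true_and, Finset.mem_singleton,
      Finset.notMem_empty, iff_false]
    intro h
    exact v.2 (h ▸ hb)
  rw [hemp, Finset.prod_empty] at hprod
  have := congrArg Units.val hprod
  norm_num at this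

lemma key_bs (hc : IsDiagRed G S c) :
    bsD G.dual (unusedT G S c) (dualCont G S c) = bsD G S c := by
  have hpt : ∀ v : {v : V // v ∉ S},
      ((dualCont G S c (phiMap G S c v)).1 = (dualCont G S c (phiMap G S c v)).2) ↔
      ((c v).1 = (c v).2) := by
    intro v
    rw [dc1 G S c hc v, dc2 G S c hc v]
    constructor
    · intro h
      have hedge : G.edg (c v).1 = G.edg (c (pMap G S c hc v)).1 := by
        rw [hc.2.1 v, h]
      have hfix : v = pMap G S c hc v := hc.2.2.2 hedge
      rw [← hfix] at h
      exact h.symm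
    · intro h
      have hpv : pMap G S c hc v = v :=
        Subtype.ext (by show G.vtx (c v).2 = v.1; rw [← h]; exact hc.1 v)
      rw [hpv]
      exact h.symm
  unfold bsD
  symm
  refine Finset.card_bij (fun v _ => phiMap G S c v) ?_ ?_ ?_
  · intro v hv
    simp only [Finset.mem_filter, Finset.mem_univ, true_and] at hv ⊢
    exact (hpt v).2 hv
  · intro v _ w _ h
    exact phiMap_inj G S c hc h
  · intro e he
    simp only [Finset.mem_filter, Finset.mem_univ, true_and] at he
    obtain ⟨v, rfl⟩ := phiMap_surj G S c e
    refine ⟨v, ?_, rfl⟩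
    simp only [Finset.mem_filter, Finset.mem_univ, true_and]
    exact (hpt v).1 he

lemma key_csgn' (hc : IsDiagRed G S c) : csgnD G.dual (unusedT G S c) (dualCont G S c) = csgnD G S c := by
  have hinjV : Function.Injective (Subtype.val : {v : V // v ∉ S} → V) :=
    Subtype.val_injective
  have hinjE : Function.Injective (fun v : {v : V // v ∉ S} => (phiMap G S c v).1) :=
    fun a b h => phiMap_inj G S c hc (Subtype.ext h)
  have hrangeV : ∀ b : V, b ∉ S → ∃ v : {v : V // v ∉ S}, v.1 = b :=
    fun b hb => ⟨⟨b, hb⟩, rfl⟩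
  have hrangeE : ∀ b : E, b ∉ unusedT G S c →
      ∃ v : {v : V // v ∉ S}, (phiMap G S c v).1 = b := by
    intro b hb
    obtain ⟨v, hv⟩ := (not_mem_unusedT G S c).1 hb
    exact ⟨v, hv⟩
  have hfixE : ∀ b ∈ unusedT G S c,
      gmapD G.dual (unusedT G S c) (dualCont G S c) b = b := fun b hb => dif_pos hb
  -- ec
  have hec : ecD G.dual (unusedT G S c) (dualCont G S c) = ecD G S c := by
    unfold ecD
    rw [filter_orbitsOf_card (pMap G S c hc) _ _ hinjE (gmap_commE G S c hc)
      (unusedT G S c) hfixE hrangeE _ (fun b _ => by simp),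
      filter_orbitsOf_card (pMap G S c hc) _ _ hinjV (gmap_commV G S c hc)
      S (gmap_fix G S c) hrangeV _ (fun b _ => by simp)]
    congr 1
    apply Finset.filter_congr
    intro O _
    rw [Finset.card_image_of_injective _ hinjE, Finset.card_image_of_injective _ hinjV]
  -- nc
  have hnc : ncD G.dual (unusedT G S c) (dualCont G S c) = ncD G S c := by
    unfold ncD
    rw [filter_orbitsOf_card (pMap G S c hc) _ _ hinjE (gmap_commE G S c hc)
      (unusedT G S c) hfixE hrangeE _
      (fun b hb => not_neg_singleton G.dual (unusedT G S c) (dualCont G S c) b hb),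
      filter_orbitsOf_card (pMap G S c hc) _ _ hinjV (gmap_commV G S c hc)
      S (gmap_fix G S c) hrangeV _ (fun b hb => not_neg_singleton G S c b hb)]
    congr 1
    apply Finset.filter_congr
    intro O hO
    obtain ⟨a, rfl⟩ := mem_orbitsOf.1 hO
    have hcl : ∀ v ∈ orbitOf (pMap G S c hc) a, pMap G S c hc v ∈ orbitOf (pMap G S c hc) a :=
      fun v hv => apply_mem_orbitOf _ hv
    have himg : (orbitOf (pMap G S c hc) a).image (pMap G S c hc) = orbitOf (pMap G S c hc) a :=
      image_of_mapsTo_inj (pMap_inj G S c hc) hcl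
    exact neg_iff_transfer G S c hc _ hcl himg
  unfold csgnD
  rw [hec, hnc, key_bs G S c hc]

lemma key_csgn (hc : IsDiagRed G S c) : csgnD G.dual (unusedT G S c) (dualCont G S c) = csgnD G S c :=
  key_csgn' G S c hc

lemma sigma_eq_of {A B : Finset V} (f : {v : V // v ∉ A} → I × I)
    (g : {v : V // v ∉ B} → I × I) (h : A = B)
    (hfg : ∀ (v : V) (hvA : v ∉ A) (hvB : v ∉ B), f ⟨v, hvA⟩ = g ⟨v, hvB⟩) :
    (⟨A, f⟩ : Σ S : Finset V, {v : V // v ∉ S} → I × I) = ⟨B, g⟩ := by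
  subst h
  exact congrArg _ (funext fun v => hfg v.1 v.2 v.2)

lemma key_double (hc : IsDiagRed G S c) :
    (⟨unusedT G.dual (unusedT G S c) (dualCont G S c),
        dualCont G.dual (unusedT G S c) (dualCont G S c)⟩ :
      Σ S : Finset V, {v : V // v ∉ S} → I × I) = ⟨S, c⟩ := by
  have hc2 := key_isDiagRed G S c hc
  apply sigma_eq_of _ _ (key_unused G S c hc)
  intro x hxA hx
  obtain ⟨w, hw⟩ := pMap_surj G S c hc ⟨x, hx⟩
  have hedg : G.dual.edg (dualCont G S c (phiMap G S c w)).1 = x := by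
    rw [hm1 G S c hc w, hw]
  have h1 := dualCont_eq G.dual (unusedT G S c) (dualCont G S c) hc2
    ⟨x, hxA⟩ (phiMap G S c w) hedg
  rw [h1]
  have hp : pMap G.dual (unusedT G S c) (dualCont G S c) hc2 (phiMap G S c w)
      = phiMap G S c (pMap G S c hc w) := by
    apply Subtype.ext
    exact hm2 G S c hc w
  rw [hp, dc2 G S c hc w, dc1 G S c hc (pMap G S c hc w), hw]

end Key


/-- The contributor-dual map `(S, c) ↦ (T, c*)` is a bijection from
the diagonally reduced contributors of `G` onto those of the incidence dual `G*`; it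
preserves `csgn` and interchanges reduced sets with unused sets: `(T, c*)` has reduced
set the unused edge set `T` of `(S, c)` and unused set `S`. -/
theorem dualCont_bijOn (G : OHG V E I) :
    Set.BijOn
      (fun p : Σ S : Finset V, {v : V // v ∉ S} → I × I =>
        (⟨unusedT G p.1 p.2, dualCont G p.1 p.2⟩ :
          Σ T : Finset E, {e : E // e ∉ T} → I × I))
      {p | IsDiagRed G p.1 p.2} {q | IsDiagRed G.dual q.1 q.2} ∧
    ∀ p : Σ S : Finset V, {v : V // v ∉ S} → I × I, IsDiagRed G p.1 p.2 →
      csgnD G.dual (unusedT G p.1 p.2) (dualCont G p.1 p.2) = csgnD G p.1 p.2 ∧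
      unusedT G.dual (unusedT G p.1 p.2) (dualCont G p.1 p.2) = p.1 := by
  classical
  refine ⟨⟨fun p hp => key_isDiagRed G p.1 p.2 hp, fun p hp q hq h => ?_, fun q hq => ?_⟩,
    fun p hp => ⟨key_csgn G p.1 p.2 hp, key_unused G p.1 p.2 hp⟩⟩
  · have e1 : (⟨unusedT G.dual (unusedT G p.1 p.2) (dualCont G p.1 p.2),
        dualCont G.dual (unusedT G p.1 p.2) (dualCont G p.1 p.2)⟩ :
          Σ S : Finset V, {v : V // v ∉ S} → I × I) = p := key_double G p.1 p.2 hp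
    have e2 : (⟨unusedT G.dual (unusedT G q.1 q.2) (dualCont G q.1 q.2),
        dualCont G.dual (unusedT G q.1 q.2) (dualCont G q.1 q.2)⟩ :
          Σ S : Finset V, {v : V // v ∉ S} → I × I) = q := key_double G q.1 q.2 hq
    exact e1.symm.trans ((congrArg
      (fun r : Σ T : Finset E, {e : E // e ∉ T} → I × I =>
        (⟨unusedT G.dual r.1 r.2, dualCont G.dual r.1 r.2⟩ :
          Σ S : Finset V, {v : V // v ∉ S} → I × I)) h).trans e2)
  · refine ⟨⟨unusedT G.dual q.1 q.2, dualCont G.dual q.1 q.2⟩, ?_, ?_⟩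
    · exact key_isDiagRed G.dual q.1 q.2 hq
    · exact key_double G.dual q.1 q.2 hq
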